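/- Let G be a finite multigraph with a fixed orientation O. Then the number of distinct score vectors of spanning subdigraphs of G_O equals T_G(2,1), i.e., the number of spanning forests of G. In particular, this count is independent of the choice of orientation O. -/

import Mathlib

open Finset

variable {V E : Type*}

/-- Number of connected components of the multigraph on vertex set `V`
with edges `A ⊆ E`, where `ends e` gives the (unordered) endpoints of `e`. -/
noncomputable def numComponents (ends : E → Sym2 V) (A : Finset E) : ℕ :=
  Nat.card (SimpleGraph.fromRel fun x y => ∃ e ∈ A, ends e = s(x, y)).ConnectedComponent

/-- The spanning subgraph `(V, A)` of the multigraph is a forest: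
no loops, no parallel edges, and the underlying simple graph is acyclic. -/
def IsForestEdges (ends : E → Sym2 V) (A : Finset E) : Prop :=
  (∀ e ∈ A, ¬ (ends e).IsDiag) ∧ Set.InjOn ends ↑A ∧
    (SimpleGraph.fromRel fun x y => ∃ e ∈ A, ends e = s(x, y)).IsAcyclic

/-- Subset-expansion evaluation of the Tutte polynomial of the multigraph. -/
noncomputable def tutteEval [Fintype V] [Fintype E] [DecidableEq E]
    (ends : E → Sym2 V) (x y : ℤ) : ℤ :=
  ∑ A : Finset E,
    (x - 1) ^ (numComponents ends A - numComponents ends Finset.univ) *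
      (y - 1) ^ (numComponents ends A + A.card - Fintype.card V)

/-- Tail of edge `e` under the orientation `σ` (edges carry a reference
direction `src e → tgt e`; `σ e = true` means the edge is flipped). -/
def otail (src tgt : E → V) (σ : E → Bool) (e : E) : V :=
  if σ e then tgt e else src e

/-- Head of edge `e` under the orientation `σ`. -/
def ohead (src tgt : E → V) (σ : E → Bool) (e : E) : V :=
  if σ e then src e else tgt e

/-- Outdegree of `v` under the orientation `σ`. -/
def outdeg [Fintype E] [DecidableEq V] (src tgt : E → V) (σ : E → Bool) (v : V) : ℕ :=
  (Finset.univ.filter fun e => otail src tgt σ e = v).card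

/-- Indegree of `v` under the orientation `σ`. -/
def indeg [Fintype E] [DecidableEq V] (src tgt : E → V) (σ : E → Bool) (v : V) : ℕ :=
  (Finset.univ.filter fun e => ohead src tgt σ e = v).card

/-- Score of `v` under the orientation `σ`: outdegree minus indegree. -/
def score [Fintype E] [DecidableEq V] (src tgt : E → V) (σ : E → Bool) (v : V) : ℤ :=
  (outdeg src tgt σ v : ℤ) - (indeg src tgt σ v : ℤ)

/-- Score of `v` in the spanning subdigraph of `G_σ` with arc set `F`. -/
def scoreSub [DecidableEq V] (src tgt : E → V) (σ : E → Bool) (F : Finset E) (v : V) : ℤ :=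
  ((F.filter fun e => otail src tgt σ e = v).card : ℤ) -
    ((F.filter fun e => ohead src tgt σ e = v).card : ℤ)

/-- Degree of `v` in the spanning subgraph with edge set `F` (loops count twice). -/
def degIn [DecidableEq V] (src tgt : E → V) (F : Finset E) (v : V) : ℕ :=
  (F.filter fun e => src e = v).card + (F.filter fun e => tgt e = v).card

/-- Directed reachability in the digraph `G_σ`. -/
def dirReach (src tgt : E → V) (σ : E → Bool) : V → V → Prop :=
  Relation.ReflTransGen fun x y => ∃ e, otail src tgt σ e = x ∧ ohead src tgt σ e = y


set_option linter.unusedSectionVars false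
set_option maxHeartbeats 1600000

section AuxComp
variable [Fintype V] [DecidableEq V]

open Classical in
lemma comp_count {G H : SimpleGraph V} {x y : V} (hle : G ≤ H)
    (hrae : ∀ {v w : V}, H.Reachable v w →
      G.Reachable v w ∨ (G.Reachable v x ∧ G.Reachable y w) ∨
      (G.Reachable v y ∧ G.Reachable x w)) :
    Nat.card G.ConnectedComponent ≤ Nat.card H.ConnectedComponent + 1 ∧
    (H.Adj x y → ¬ G.Reachable x y →
      Nat.card G.ConnectedComponent = Nat.card H.ConnectedComponent + 1) := by
  have wd : ∀ v w : V, G.Reachable v w →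
      (if G.Reachable v y then (Sum.inr () : H.ConnectedComponent ⊕ Unit)
        else Sum.inl (H.connectedComponentMk v)) =
      (if G.Reachable w y then Sum.inr () else Sum.inl (H.connectedComponentMk w)) := by
    intro v w hvw
    by_cases hv : G.Reachable v y
    · rw [if_pos hv, if_pos (hvw.symm.trans hv)]
    · rw [if_neg hv, if_neg (fun hw => hv (hvw.trans hw))]
      exact congrArg _ (SimpleGraph.ConnectedComponent.sound (hvw.mono hle))
  let j : G.ConnectedComponent → H.ConnectedComponent ⊕ Unit := Quot.lift _ wd
  have hj : ∀ v : V, j (G.connectedComponentMk v) =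
      (if G.Reachable v y then Sum.inr () else Sum.inl (H.connectedComponentMk v)) :=
    fun _ => rfl
  have hinj : Function.Injective j := by
    intro c c'
    refine SimpleGraph.ConnectedComponent.ind₂ (fun v w h => ?_) c c'
    rw [hj, hj] at h
    by_cases hv : G.Reachable v y <;> by_cases hw : G.Reachable w y
    · exact SimpleGraph.ConnectedComponent.sound (hv.trans hw.symm)
    · rw [if_pos hv, if_neg hw] at h; exact absurd h (by simp)
    · rw [if_neg hv, if_pos hw] at h; exact absurd h (by simp)
    · rw [if_neg hv, if_neg hw] at h
      have := SimpleGraph.ConnectedComponent.exact (Sum.inl.inj h)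
      rcases hrae this with h1 | ⟨h1, h2⟩ | ⟨h1, h2⟩
      · exact SimpleGraph.ConnectedComponent.sound h1
      · exact absurd h2.symm hw
      · exact absurd h1 hv
  constructor
  · calc Nat.card G.ConnectedComponent ≤ Nat.card (H.ConnectedComponent ⊕ Unit) :=
        Nat.card_le_card_of_injective j hinj
    _ = Nat.card H.ConnectedComponent + 1 := by rw [Nat.card_sum]; simp
  · intro hH hnr
    have hsurj : Function.Surjective j := by
      rintro (c | u)
      · refine SimpleGraph.ConnectedComponent.ind (fun v => ?_) c
        by_cases hv : G.Reachable v y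
        · refine ⟨G.connectedComponentMk x, ?_⟩
          rw [hj, if_neg hnr]
          exact congrArg _
            (SimpleGraph.ConnectedComponent.sound (hH.reachable.trans ((hv.mono hle).symm)))
        · exact ⟨G.connectedComponentMk v, by rw [hj, if_neg hv]⟩
      · exact ⟨G.connectedComponentMk y,
          by rw [hj, if_pos (SimpleGraph.Reachable.refl y)]⟩
    rw [Nat.card_congr (Equiv.ofBijective j ⟨hinj, hsurj⟩), Nat.card_sum]
    simp

lemma card_comp_eq_of_reach {G H : SimpleGraph V} (hle : G ≤ H)
    (hback : ∀ p q : V, H.Adj p q → G.Reachable p q) :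
    Nat.card G.ConnectedComponent = Nat.card H.ConnectedComponent := by
  have wd2 : ∀ v w : V, H.Reachable v w → G.connectedComponentMk v = G.connectedComponentMk w := by
    intro v w hvw
    obtain ⟨p⟩ := hvw
    induction p with
    | nil => rfl
    | cons ha _ ih => exact (SimpleGraph.ConnectedComponent.sound (hback _ _ ha)).trans ih
  refine Nat.card_congr ⟨Quot.lift (fun v => H.connectedComponentMk v)
      (fun v w h => SimpleGraph.ConnectedComponent.sound (h.mono hle)),
    Quot.lift (fun v => G.connectedComponentMk v) wd2, ?_, ?_⟩
  · exact SimpleGraph.ConnectedComponent.ind (fun v => rfl)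
  · exact SimpleGraph.ConnectedComponent.ind (fun v => rfl)

lemma reach_add_edge {G H : SimpleGraph V} {x y : V}
    (hadj : ∀ p q, H.Adj p q → G.Adj p q ∨ (p = x ∧ q = y) ∨ (p = y ∧ q = x))
    {v w : V} (h : H.Reachable v w) :
    G.Reachable v w ∨ (G.Reachable v x ∧ G.Reachable y w) ∨
      (G.Reachable v y ∧ G.Reachable x w) := by
  obtain ⟨p⟩ := h
  induction p with
  | nil => exact Or.inl (SimpleGraph.Reachable.refl _)
  | @cons u m w ha p ih =>
    rcases hadj _ _ ha with h1 | ⟨rfl, rfl⟩ | ⟨rfl, rfl⟩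
    · rcases ih with h2 | ⟨h2, h3⟩ | ⟨h2, h3⟩
      · exact Or.inl (h1.reachable.trans h2)
      · exact Or.inr (Or.inl ⟨h1.reachable.trans h2, h3⟩)
      · exact Or.inr (Or.inr ⟨h1.reachable.trans h2, h3⟩)
    · rcases ih with h2 | ⟨h2, h3⟩ | ⟨h2, h3⟩
      · exact Or.inr (Or.inl ⟨SimpleGraph.Reachable.refl _, h2⟩)
      · exact Or.inr (Or.inl ⟨SimpleGraph.Reachable.refl _, h3⟩)
      · exact Or.inl h3
    · rcases ih with h2 | ⟨h2, h3⟩ | ⟨h2, h3⟩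
      · exact Or.inr (Or.inr ⟨SimpleGraph.Reachable.refl _, h2⟩)
      · exact Or.inl h3
      · exact Or.inr (Or.inr ⟨SimpleGraph.Reachable.refl _, h3⟩)

end AuxComp

section AuxGraph
variable [Fintype V] [DecidableEq V] [DecidableEq E]

def gph (ends : E → Sym2 V) (A : Finset E) : SimpleGraph V :=
  SimpleGraph.fromRel fun x y => ∃ e ∈ A, ends e = s(x, y)

lemma numComponents_eq (ends : E → Sym2 V) (A : Finset E) :
    numComponents ends A = Nat.card (gph ends A).ConnectedComponent := rfl

lemma isForest_iff (ends : E → Sym2 V) (A : Finset E) :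
    IsForestEdges ends A ↔ ((∀ e ∈ A, ¬ (ends e).IsDiag) ∧ Set.InjOn ends ↑A ∧
      (gph ends A).IsAcyclic) := Iff.rfl

lemma gph_adj (ends : E → Sym2 V) (A : Finset E) (p q : V) :
    (gph ends A).Adj p q ↔ p ≠ q ∧ ∃ a ∈ A, ends a = s(p, q) := by
  rw [gph, SimpleGraph.fromRel_adj]
  constructor
  · rintro ⟨h, ⟨a, ha, he⟩ | ⟨a, ha, he⟩⟩
    · exact ⟨h, a, ha, he⟩
    · exact ⟨h, a, ha, he.trans (Sym2.eq_swap)⟩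
  · rintro ⟨h, a, ha, he⟩
    exact ⟨h, Or.inl ⟨a, ha, he⟩⟩

lemma gph_le_insert (ends : E → Sym2 V) (A : Finset E) (e : E) :
    gph ends A ≤ gph ends (insert e A) := by
  intro p q h
  rw [gph_adj] at h ⊢
  obtain ⟨h1, a, ha, he⟩ := h
  exact ⟨h1, a, mem_insert_of_mem ha, he⟩

lemma gph_insert_eq {ends : E → Sym2 V} {A : Finset E} {e : E}
    (h : (ends e).IsDiag ∨ ∃ a ∈ A, ends a = ends e) :
    gph ends (insert e A) = gph ends A := by
  ext p q
  rw [gph_adj, gph_adj]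
  constructor
  · rintro ⟨hne, a, ha, hea⟩
    rcases mem_insert.1 ha with rfl | ha'
    · rcases h with hd | ⟨a', ha', he'⟩
      · rw [hea] at hd
        exact absurd (Sym2.isDiag_iff_proj_eq |>.1 hd) hne
      · exact ⟨hne, a', ha', he'.trans hea⟩
    · exact ⟨hne, a, ha', hea⟩
  · rintro ⟨hne, a, ha, hea⟩
    exact ⟨hne, a, mem_insert_of_mem ha, hea⟩

lemma numComponents_insert_eq {ends : E → Sym2 V} {A : Finset E} {e : E}
    (h : (ends e).IsDiag ∨ ∃ a ∈ A, ends a = ends e) :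
    numComponents ends (insert e A) = numComponents ends A := by
  rw [numComponents_eq, numComponents_eq, gph_insert_eq h]

lemma gph_insert_hadj {ends : E → Sym2 V} {A : Finset E} {e : E} {x y : V}
    (he : ends e = s(x, y)) :
    ∀ p q, (gph ends (insert e A)).Adj p q →
      (gph ends A).Adj p q ∨ (p = x ∧ q = y) ∨ (p = y ∧ q = x) := by
  intro p q h
  rw [gph_adj] at h
  obtain ⟨hne, a, ha, hea⟩ := h
  rcases mem_insert.1 ha with rfl | ha'
  · rw [he] at hea
    rcases Sym2.eq_iff.1 hea with ⟨rfl, rfl⟩ | ⟨rfl, rfl⟩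
    · exact Or.inr (Or.inl ⟨rfl, rfl⟩)
    · exact Or.inr (Or.inr ⟨rfl, rfl⟩)
  · exact Or.inl ((gph_adj _ _ _ _).2 ⟨hne, a, ha', hea⟩)

lemma reach_congr {G : SimpleGraph V} {β : Sort*} {f : V → β}
    (h : ∀ v w, G.Adj v w → f v = f w) : ∀ v w, G.Reachable v w → f v = f w := by
  intro v w hr
  obtain ⟨p⟩ := hr
  induction p with
  | nil => rfl
  | cons ha _ ih => exact (h _ _ ha).trans ih

lemma card_comp_contract {ends : E → Sym2 V} {A : Finset E} {e : E} {x y : V}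
    (hxy : x ≠ y) (he : ends e = s(x, y)) (heA : e ∉ A) :
    Nat.card (gph (fun a => (ends a).map (fun v => if v = y then x else v)) A).ConnectedComponent
      = Nat.card (gph ends (insert e A)).ConnectedComponent + 1 := by
  set r : V → V := fun v => if v = y then x else v with hr
  have hrne : ∀ v, r v ≠ y := by
    intro v
    by_cases hv : v = y <;> simp [hr, hv, hxy]
  set G' : SimpleGraph V := gph (fun a => (ends a).map r) A with hG'
  set H : SimpleGraph V := gph ends (insert e A) with hH
  have hHxy : H.Adj x y := (gph_adj _ _ _ _).2 ⟨hxy, e, mem_insert_self _ _, he⟩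
  have hreach_r : ∀ p, H.Reachable (r p) p := by
    intro p
    by_cases hp : p = y
    · subst hp; simp only [hr, if_pos rfl]; exact hHxy.reachable
    · simp only [hr, if_neg hp]
      exact SimpleGraph.Reachable.refl p
  have wdf : ∀ v w, G'.Adj v w →
      (if v = y then (Sum.inr () : H.ConnectedComponent ⊕ Unit)
        else Sum.inl (H.connectedComponentMk v)) =
      (if w = y then Sum.inr () else Sum.inl (H.connectedComponentMk w)) := by
    intro v w hadj
    rw [gph_adj] at hadj
    obtain ⟨hne, a, ha, hea⟩ := hadj
    obtain ⟨p0, q0, hq⟩ : ∃ p0 q0, ends a = s(p0, q0) :=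
      Sym2.inductionOn (f := fun z => ∃ p0 q0, z = s(p0, q0)) (ends a)
        (fun p0 q0 => ⟨p0, q0, rfl⟩)
    rw [hq, Sym2.map_pair_eq] at hea
    have hne0 : p0 ≠ q0 := by
      rintro rfl
      rcases Sym2.eq_iff.1 hea with ⟨rfl, rfl⟩ | ⟨rfl, rfl⟩ <;> exact hne rfl
    have hadj0 : H.Adj p0 q0 :=
      (gph_adj _ _ _ _).2 ⟨hne0, a, mem_insert_of_mem ha, hq⟩
    have key : ∀ s t : V, H.Adj s t →
        H.Reachable (r s) (r t) := by
      intro s t hst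
      exact ((hreach_r s).trans hst.reachable).trans (hreach_r t).symm
    rcases Sym2.eq_iff.1 hea with ⟨hv, hw⟩ | ⟨hv, hw⟩
    · rw [← hv, ← hw, if_neg (hrne p0), if_neg (hrne q0)]
      exact congrArg _ (SimpleGraph.ConnectedComponent.sound (key _ _ hadj0))
    · rw [← hv, ← hw, if_neg (hrne q0), if_neg (hrne p0)]
      exact congrArg _ (SimpleGraph.ConnectedComponent.sound (key _ _ hadj0.symm))
  have wdb : ∀ v w, H.Adj v w →
      G'.connectedComponentMk (r v) = G'.connectedComponentMk (r w) := by
    intro v w hadj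
    rw [gph_adj] at hadj
    obtain ⟨hne, a, ha, hea⟩ := hadj
    rcases mem_insert.1 ha with rfl | ha'
    · rw [he] at hea
      rcases Sym2.eq_iff.1 hea with ⟨rfl, rfl⟩ | ⟨rfl, rfl⟩
      · simp [hr]
      · simp [hr]
    · by_cases hrvw : r v = r w
      · rw [hrvw]
      · refine SimpleGraph.ConnectedComponent.sound (SimpleGraph.Adj.reachable ?_)
        refine (gph_adj _ _ _ _).2 ⟨hrvw, a, ha', ?_⟩
        rw [hea, Sym2.map_pair_eq]
  let F : G'.ConnectedComponent → H.ConnectedComponent ⊕ Unit :=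
    Quot.lift _ (reach_congr wdf)
  let Finv : H.ConnectedComponent ⊕ Unit → G'.ConnectedComponent :=
    Sum.elim (Quot.lift (fun v => G'.connectedComponentMk (r v)) (reach_congr wdb))
      (fun _ => G'.connectedComponentMk y)
  have hFmk : ∀ v : V, F (G'.connectedComponentMk v) =
      (if v = y then Sum.inr () else Sum.inl (H.connectedComponentMk v)) := fun _ => rfl
  have hFinvmk : ∀ v : V, Finv (Sum.inl (H.connectedComponentMk v)) =
      G'.connectedComponentMk (r v) := fun _ => rfl
  have hli : Function.LeftInverse Finv F := by
    refine SimpleGraph.ConnectedComponent.ind (fun v => ?_)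
    by_cases hv : v = y
    · subst hv; rw [hFmk, if_pos rfl]; rfl
    · rw [hFmk, if_neg hv, hFinvmk]
      simp only [hr, if_neg hv]
  have hri : Function.RightInverse Finv F := by
    rintro (c | u)
    · refine SimpleGraph.ConnectedComponent.ind (fun v => ?_) c
      rw [hFinvmk, hFmk, if_neg (hrne v)]
      exact congrArg _ (SimpleGraph.ConnectedComponent.sound (hreach_r v))
    · rcases u
      rw [show Finv (Sum.inr ()) = G'.connectedComponentMk y from rfl, hFmk, if_pos rfl]
  rw [Nat.card_congr ⟨F, Finv, hli, hri⟩, Nat.card_sum]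
  simp

lemma card_comp_contract' {ends : E → Sym2 V} {A : Finset E} {e : E} {x y : V}
    (hxy : x ≠ y) (he : ends e = s(x, y)) (heA : e ∉ A) :
    numComponents (fun a => (ends a).map (fun v => if v = y then x else v)) A
      = numComponents ends (insert e A) + 1 := by
  rw [numComponents_eq, numComponents_eq]
  exact card_comp_contract hxy he heA

lemma sym2_rep (z : Sym2 V) : ∃ p q, z = s(p, q) :=
  Sym2.inductionOn (f := fun z => ∃ p q, z = s(p, q)) z (fun p q => ⟨p, q, rfl⟩)

lemma gph_empty (ends : E → Sym2 V) : gph ends (∅ : Finset E) = ⊥ := by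
  ext p q
  rw [gph_adj]
  simp

lemma numComponents_empty (ends : E → Sym2 V) :
    numComponents ends (∅ : Finset E) = Fintype.card V := by
  rw [numComponents_eq, gph_empty]
  have : Function.Bijective ((⊥ : SimpleGraph V).connectedComponentMk) := by
    constructor
    · intro v w h
      exact SimpleGraph.reachable_bot.1 (SimpleGraph.ConnectedComponent.exact h)
    · exact SimpleGraph.ConnectedComponent.ind (fun v => ⟨v, rfl⟩)
  rw [← Nat.card_congr (Equiv.ofBijective _ this), Nat.card_eq_fintype_card]

lemma isAcyclic_mono {G H : SimpleGraph V} (h : G ≤ H) (hH : H.IsAcyclic) : G.IsAcyclic := by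
  intro v c hc
  exact hH (c.mapLe h) (hc.mapLe h)

lemma card_le_comp_add (ends : E → Sym2 V) (A : Finset E) :
    Fintype.card V ≤ numComponents ends A + A.card := by
  classical
  induction A using Finset.induction_on with
  | empty => rw [numComponents_empty]; simp
  | @insert e A heA ih =>
    rw [card_insert_of_notMem heA]
    by_cases hd : (ends e).IsDiag
    · rw [numComponents_eq, gph_insert_eq (Or.inl hd), ← numComponents_eq]
      omega
    · obtain ⟨x, y, hxy⟩ := sym2_rep (ends e)
      have hne : x ≠ y := by
        rw [hxy, Sym2.isDiag_iff_proj_eq] at hd; exact hd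
      have := (comp_count (gph_le_insert ends A e)
        (fun {v w} h => reach_add_edge (gph_insert_hadj hxy) h)).1
      rw [numComponents_eq] at ih ⊢
      omega

lemma isForest_of_insert {ends : E → Sym2 V} {A : Finset E} {e : E}
    (h : IsForestEdges ends (insert e A)) : IsForestEdges ends A := by
  obtain ⟨h1, h2, h3⟩ := h
  refine ⟨fun a ha => h1 a (mem_insert_of_mem ha),
    h2.mono (Finset.coe_subset.2 (Finset.subset_insert e A)), ?_⟩
  exact isAcyclic_mono (gph_le_insert ends A e) h3

lemma comp_add_card_of_forest {ends : E → Sym2 V} {A : Finset E}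
    (h : IsForestEdges ends A) : numComponents ends A + A.card = Fintype.card V := by
  classical
  induction A using Finset.induction_on with
  | empty => rw [numComponents_empty]; simp
  | @insert e A heA ih =>
    have hF : IsForestEdges ends A := isForest_of_insert h
    obtain ⟨x, y, hxy⟩ := sym2_rep (ends e)
    have hne : x ≠ y := by
      have := h.1 e (mem_insert_self e A)
      rw [hxy] at this
      simp [Sym2.isDiag_iff_proj_eq] at this
      exact this
    have hHadj : (gph ends (insert e A)).Adj x y :=
      (gph_adj _ _ _ _).2 ⟨hne, e, mem_insert_self _ _, hxy⟩
    have hbridge := (SimpleGraph.isAcyclic_iff_forall_adj_isBridge.1 h.2.2) hHadj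
    rw [SimpleGraph.isBridge_iff] at hbridge
    have hle2 : gph ends A ≤ (gph ends (insert e A)) \ SimpleGraph.fromEdgeSet {s(x, y)} := by
      intro p q hpq
      rw [gph_adj] at hpq
      obtain ⟨hpqne, a, ha, hea⟩ := hpq
      rw [SimpleGraph.sdiff_adj, SimpleGraph.fromEdgeSet_adj]
      refine ⟨(gph_adj _ _ _ _).2 ⟨hpqne, a, mem_insert_of_mem ha, hea⟩, ?_⟩
      rintro ⟨hpq, -⟩
      have : ends a = ends e := by rw [hea, hxy]; exact hpq
      have : a = e := h.2.1 (by simp [ha]) (by simp) this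
      exact heA (this ▸ ha)
    have hnr : ¬ (gph ends A).Reachable x y :=
      fun hr => hbridge (hr.mono hle2)
    have := (comp_count (gph_le_insert ends A e)
      (fun {v w} hh => reach_add_edge (gph_insert_hadj hxy) hh)).2 hHadj hnr
    have ihe := ih hF
    rw [numComponents_eq] at ihe
    rw [numComponents_eq, card_insert_of_notMem heA]
    omega

lemma forest_of_comp_add_card {ends : E → Sym2 V} {A : Finset E}
    (h : numComponents ends A + A.card = Fintype.card V) : IsForestEdges ends A := by
  classical
  by_contra hnF
  rw [isForest_iff, not_and_or, not_and_or] at hnF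
  have key : ∃ e ∈ A, Nat.card (gph ends A).ConnectedComponent
      = Nat.card (gph ends (A.erase e)).ConnectedComponent := by
    rcases hnF with hd | hinj | hacy
    · push_neg at hd
      obtain ⟨e, he, hd⟩ := hd
      refine ⟨e, he, ?_⟩
      conv_lhs => rw [← Finset.insert_erase he]
      rw [gph_insert_eq (Or.inl hd)]
    · rw [Set.InjOn] at hinj
      push_neg at hinj
      obtain ⟨a, ha, b, hb, hab, hne⟩ := hinj
      refine ⟨b, hb, ?_⟩
      conv_lhs => rw [← Finset.insert_erase hb]
      rw [gph_insert_eq (Or.inr ⟨a, Finset.mem_erase.2 ⟨hne, ha⟩, hab⟩)]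
    · rw [SimpleGraph.isAcyclic_iff_forall_adj_isBridge] at hacy
      push_neg at hacy
      obtain ⟨v, w, hadj, hnb⟩ := hacy
      rw [SimpleGraph.isBridge_iff] at hnb
      have hreach : ((gph ends A) \ SimpleGraph.fromEdgeSet {s(v, w)}).Reachable v w := by
        exact not_not.1 hnb
      obtain ⟨hvw, e, he, hee⟩ := (gph_adj _ _ _ _).1 hadj
      have hle2 : (gph ends A) \ SimpleGraph.fromEdgeSet {s(v, w)} ≤ gph ends (A.erase e) := by
        intro p q hpq
        rw [SimpleGraph.sdiff_adj, SimpleGraph.fromEdgeSet_adj, gph_adj] at hpq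
        obtain ⟨⟨hpqne, a, ha, hea⟩, hnot⟩ := hpq
        rw [gph_adj]
        refine ⟨hpqne, a, Finset.mem_erase.2 ⟨?_, ha⟩, hea⟩
        rintro rfl
        exact hnot ⟨by rw [← hea, hee]; exact rfl, hpqne⟩
      have hreach2 : (gph ends (A.erase e)).Reachable v w := hreach.mono hle2
      refine ⟨e, he, ?_⟩
      have hback : ∀ p q, (gph ends A).Adj p q → (gph ends (A.erase e)).Reachable p q := by
        intro p q hpq
        have : gph ends A = gph ends (insert e (A.erase e)) := by
          rw [Finset.insert_erase he]
        rw [this] at hpq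
        rcases gph_insert_hadj hee p q hpq with h1 | ⟨rfl, rfl⟩ | ⟨rfl, rfl⟩
        · exact h1.reachable
        · exact hreach2
        · exact hreach2.symm
      have hle3 : gph ends (A.erase e) ≤ gph ends A := by
        conv_rhs => rw [← Finset.insert_erase he]
        exact gph_le_insert _ _ _
      exact (card_comp_eq_of_reach hle3 hback).symm
  obtain ⟨e, he, hc⟩ := key
  have hA := card_le_comp_add ends (A.erase e)
  rw [numComponents_eq] at h hA
  rw [Finset.card_erase_of_mem he] at hA
  have hcard : 1 ≤ A.card := Finset.card_pos.2 ⟨e, he⟩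
  omega

end AuxGraph

section AuxPi
variable [Fintype V] [DecidableEq V]

def chi (x y : V) : V → ℤ := fun v => (if x = v then 1 else 0) - (if y = v then 1 else 0)

noncomputable def piC (x y : V) (g : V → ℤ) : V → ℤ :=
  fun v => if v = y then 0 else if v = x then g x + g y else g v

lemma chi_x {x y : V} (hxy : x ≠ y) : chi x y x = 1 := by
  simp [chi, hxy, Ne.symm hxy]

lemma chi_y {x y : V} (hxy : x ≠ y) : chi x y y = -1 := by
  simp [chi, hxy]

lemma chi_other {x y v : V} (hvx : v ≠ x) (hvy : v ≠ y) : chi x y v = 0 := by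
  simp [chi, Ne.symm hvx, Ne.symm hvy]

lemma chi_apply (x y v : V) :
    chi (V := V) x y v = (if x = v then (1:ℤ) else 0) - (if y = v then 1 else 0) := rfl

lemma piC_add_smul {x y : V} (hxy : x ≠ y) (g : V → ℤ) (k : ℤ) :
    piC x y (g + k • chi x y) = piC x y g := by
  funext v
  by_cases hvy : v = y
  · subst hvy; simp [piC]
  · by_cases hvx : v = x
    · subst hvx
      have e1 : (g + k • chi v y) v = g v + k * chi v y v := by simp
      have e2 : (g + k • chi v y) y = g y + k * chi v y y := by simp
      simp only [piC, if_neg hvy, eq_self_iff_true, if_true, e1, e2, chi_x hxy, chi_y hxy]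
      ring
    · simp only [piC, if_neg hvy, if_neg hvx, Pi.add_apply, Pi.smul_apply, smul_eq_mul,
        chi_other hvx hvy]
      ring

lemma piC_eq_imp {x y : V} (hxy : x ≠ y) {g g' : V → ℤ} (h : piC x y g = piC x y g') :
    ∃ k : ℤ, g' = g + k • chi x y := by
  refine ⟨g' x - g x, funext (fun v => ?_)⟩
  have hx := congrFun h x
  simp only [piC, if_neg hxy, eq_self_iff_true, if_true] at hx
  by_cases hvy : v = y
  · subst hvy
    simp only [Pi.add_apply, Pi.smul_apply, smul_eq_mul, chi_y hxy]
    linarith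
  · by_cases hvx : v = x
    · subst hvx
      simp only [Pi.add_apply, Pi.smul_apply, smul_eq_mul, chi_x hxy]
      ring
    · have hv := congrFun h v
      simp only [piC, if_neg hvy, if_neg hvx] at hv
      simp only [Pi.add_apply, Pi.smul_apply, smul_eq_mul, chi_other hvx hvy, hv]
      ring

lemma pi_count (T : Finset (V → ℤ)) (x y : V) (hxy : x ≠ y)
    (hcont : ∀ g ∈ T, ∀ k : ℤ, 1 ≤ k → g + k • chi x y ∈ T → g + (k - 1) • chi x y ∈ T) :
    (T.image (piC x y)).card + (T ∩ T.image (· + chi x y)).card = T.card := by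
  classical
  have hIT : T ∩ T.image (· + chi x y) = T.filter (fun g => g - chi x y ∈ T) := by
    ext h
    simp only [Finset.mem_inter, Finset.mem_image, Finset.mem_filter]
    constructor
    · rintro ⟨hT, g, hgT, rfl⟩
      exact ⟨hT, by simpa using hgT⟩
    · rintro ⟨hT, hsub⟩
      exact ⟨hT, h - chi x y, hsub, by simp⟩
  have himg : (T.image (piC x y)).card = (T.filter (fun g => g - chi x y ∉ T)).card := by
    symm
    refine Finset.card_bij (fun g _ => piC x y g) (fun g hg => Finset.mem_image_of_mem _
      (Finset.filter_subset _ _ hg)) ?_ ?_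
    · intro g hg g' hg' heq
      obtain ⟨k, hk⟩ := piC_eq_imp hxy heq
      rcases lt_trichotomy k 0 with hneg | rfl | hpos
      · exfalso
        have hgT := (Finset.mem_filter.1 hg).1
        have hg'T := (Finset.mem_filter.1 hg').1
        have hgmem : g' + (-k) • chi x y ∈ T := by
          have : g' + (-k) • chi x y = g := by
            rw [hk]; funext v
            simp only [Pi.add_apply, Pi.smul_apply, smul_eq_mul]; ring
          rw [this]; exact hgT
        have := hcont g' hg'T (-k) (by omega) hgmem
        have hgc : g' + (-k - 1) • chi x y = g - chi x y := by
          rw [hk]; funext v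
          simp only [Pi.add_apply, Pi.sub_apply, Pi.smul_apply, smul_eq_mul]; ring
        rw [hgc] at this
        exact (Finset.mem_filter.1 hg).2 this
      · symm; rw [hk]; funext v; simp
      · exfalso
        have hgT := (Finset.mem_filter.1 hg).1
        have hg'T := (Finset.mem_filter.1 hg').1
        have := hcont g hgT k hpos (hk ▸ hg'T)
        have hgc : g + (k - 1) • chi x y = g' - chi x y := by
          rw [hk]; funext v
          simp only [Pi.add_apply, Pi.sub_apply, Pi.smul_apply, smul_eq_mul]; ring
        rw [hgc] at this
        exact (Finset.mem_filter.1 hg').2 this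
    · intro t ht
      obtain ⟨g0, hg0, rfl⟩ := Finset.mem_image.1 ht
      have hFibne : (T.filter (fun g => piC x y g = piC x y g0)).Nonempty :=
        ⟨g0, Finset.mem_filter.2 ⟨hg0, rfl⟩⟩
      obtain ⟨g1, hg1, hmin⟩ := Finset.exists_min_image _ (fun g => g x) hFibne
      obtain ⟨hg1T, hg1pi⟩ := Finset.mem_filter.1 hg1
      refine ⟨g1, Finset.mem_filter.2 ⟨hg1T, fun hctr => ?_⟩, hg1pi⟩
      have hpieq : piC x y (g1 - chi x y) = piC x y g0 := by
        have : g1 - chi x y = g1 + (-1 : ℤ) • chi x y := by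
          funext v
          simp only [Pi.add_apply, Pi.sub_apply, Pi.smul_apply, smul_eq_mul]; ring
        rw [this, piC_add_smul hxy, hg1pi]
      have hmem : g1 - chi x y ∈ T.filter (fun g => piC x y g = piC x y g0) :=
        Finset.mem_filter.2 ⟨hctr, hpieq⟩
      have := hmin _ hmem
      simp only [Pi.sub_apply, chi_x hxy] at this
      omega
  rw [himg, hIT, add_comm, Finset.card_filter_add_card_filter_not]

end AuxPi

section AuxScore
variable [Fintype V] [Fintype E] [DecidableEq V] [DecidableEq E]
variable (src tgt : E → V) (σ : E → Bool)

def uvec (e : E) : V → ℤ := fun v =>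
  (if otail src tgt σ e = v then 1 else 0) - (if ohead src tgt σ e = v then 1 else 0)
def dtail (F1 : Finset E) (a : E) : V := if a ∈ F1 then ohead src tgt σ a else otail src tgt σ a
def dhead (F1 : Finset E) (a : E) : V := if a ∈ F1 then otail src tgt σ a else ohead src tgt σ a
def wv (F1 : Finset E) (a : E) : V → ℤ := fun v =>
  (if dtail src tgt σ F1 a = v then 1 else 0) - (if dhead src tgt σ F1 a = v then 1 else 0)

lemma scoreSub_sum (F : Finset E) (v : V) :
    scoreSub src tgt σ F v = ∑ e ∈ F, uvec src tgt σ e v := by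
  simp only [scoreSub, uvec, Finset.card_filter]
  push_cast
  rw [Finset.sum_sub_distrib]

lemma scoreSub_insert {F : Finset E} {e : E} (he : e ∉ F) (v : V) :
    scoreSub src tgt σ (insert e F) v = scoreSub src tgt σ F v + uvec src tgt σ e v := by
  rw [scoreSub_sum, scoreSub_sum, Finset.sum_insert he, add_comm]

lemma wv_of_mem {F1 : Finset E} {a : E} (h : a ∈ F1) (v : V) :
    wv src tgt σ F1 a v = - uvec src tgt σ a v := by
  rw [wv, dtail, dhead, if_pos h, if_pos h, uvec]; ring

lemma wv_of_not_mem {F1 : Finset E} {a : E} (h : a ∉ F1) (v : V) :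
    wv src tgt σ F1 a v = uvec src tgt σ a v := by
  rw [wv, dtail, dhead, if_neg h, if_neg h, uvec]

lemma sum_wv (F1 F2 : Finset E) (v : V) :
    ∑ a ∈ (F2 \ F1) ∪ (F1 \ F2), wv src tgt σ F1 a v
      = scoreSub src tgt σ F2 v - scoreSub src tgt σ F1 v := by
  rw [Finset.sum_union (disjoint_sdiff_sdiff)]
  have h1 : ∑ a ∈ F2 \ F1, wv src tgt σ F1 a v = ∑ a ∈ F2 \ F1, uvec src tgt σ a v :=
    Finset.sum_congr rfl (fun a ha => wv_of_not_mem src tgt σ (Finset.mem_sdiff.1 ha).2 v)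
  have h2 : ∑ a ∈ F1 \ F2, wv src tgt σ F1 a v = -∑ a ∈ F1 \ F2, uvec src tgt σ a v := by
    rw [← Finset.sum_neg_distrib]
    exact Finset.sum_congr rfl (fun a ha => wv_of_mem src tgt σ (Finset.mem_sdiff.1 ha).1 v)
  rw [h1, h2, scoreSub_sum, scoreSub_sum]
  have e2 : ∑ a ∈ F2, uvec src tgt σ a v
      = ∑ a ∈ F2 ∩ F1, uvec src tgt σ a v + ∑ a ∈ F2 \ F1, uvec src tgt σ a v :=
    (Finset.sum_inter_add_sum_sdiff _ _ _).symm
  have e1 : ∑ a ∈ F1, uvec src tgt σ a v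
      = ∑ a ∈ F1 ∩ F2, uvec src tgt σ a v + ∑ a ∈ F1 \ F2, uvec src tgt σ a v :=
    (Finset.sum_inter_add_sum_sdiff _ _ _).symm
  rw [e1, e2, Finset.inter_comm F2 F1]
  ring

end AuxScore

section AuxWalk
variable [Fintype V] [Fintype E] [DecidableEq V] [DecidableEq E]
variable (dt dh : E → V) (D : Finset E)

def IsWalk : V → List E → V → Prop
  | x, [], y => x = y
  | x, a :: l, y => a ∈ D ∧ dt a = x ∧ IsWalk (dh a) l y

lemma isWalk_append (l1 l2 : List E) (x y : V) :
    IsWalk dt dh D x (l1 ++ l2) y ↔ ∃ m, IsWalk dt dh D x l1 m ∧ IsWalk dt dh D m l2 y := by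
  induction l1 generalizing x with
  | nil =>
    simp only [List.nil_append, IsWalk]
    constructor
    · intro h; exact ⟨x, rfl, h⟩
    · rintro ⟨m, rfl, h⟩; exact h
  | cons a l1 ih =>
    simp only [List.cons_append, IsWalk]
    constructor
    · rintro ⟨haD, hta, hw⟩
      obtain ⟨m, h1, h2⟩ := (ih _).1 hw
      exact ⟨m, ⟨haD, hta, h1⟩, h2⟩
    · rintro ⟨m, ⟨haD, hta, h1⟩, h2⟩
      exact ⟨haD, hta, (ih _).2 ⟨m, h1, h2⟩⟩

lemma walk_of_rtg {x y : V}
    (h : Relation.ReflTransGen (fun p q => ∃ a ∈ D, dt a = p ∧ dh a = q) x y) :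
    ∃ l, IsWalk dt dh D x l y := by
  induction h using Relation.ReflTransGen.head_induction_on with
  | refl => exact ⟨[], rfl⟩
  | head hstep _ ih =>
    obtain ⟨a, haD, hta, hha⟩ := hstep
    obtain ⟨l, hl⟩ := ih
    exact ⟨a :: l, haD, hta, hha ▸ hl⟩

lemma isWalk_mem_D {x y : V} {l : List E} (h : IsWalk dt dh D x l y) : ∀ a ∈ l, a ∈ D := by
  induction l generalizing x with
  | nil => intro a ha; cases ha
  | cons b l ih =>
    obtain ⟨hb, _, hw⟩ := h
    intro a ha
    rcases List.mem_cons.1 ha with rfl | ha'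
    · exact hb
    · exact ih hw a ha'

lemma walk_extract {y : V} (wfun : E → V → ℤ)
    (hwf : ∀ a, wfun a = fun v => (if dt a = v then 1 else 0) - (if dh a = v then 1 else 0)) :
    ∀ (n : ℕ) (l : List E) (x : V), l.length ≤ n → IsWalk dt dh D x l y →
    ∃ P : Finset E, (∀ a ∈ P, a ∈ l) ∧
      ∀ v, ∑ a ∈ P, wfun a v = (if x = v then 1 else 0) - (if y = v then 1 else 0) := by
  intro n
  induction n with
  | zero =>
    intro l x hlen hw
    rw [Nat.le_zero, List.length_eq_zero_iff] at hlen
    subst hlen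
    cases hw
    exact ⟨∅, by simp, fun v => by simp⟩
  | succ n ih =>
    intro l x hlen hw
    match l with
    | [] =>
      cases hw
      exact ⟨∅, by simp, fun v => by simp⟩
    | a :: l' =>
      obtain ⟨haD, hta, hw'⟩ := hw
      by_cases hal : a ∈ l'
      · obtain ⟨l2, l3, rfl⟩ := List.append_of_mem hal
        obtain ⟨m, hw2, hw3⟩ := (isWalk_append dt dh D l2 (a :: l3) (dh a) y).1 hw'
        obtain ⟨haD', hta', hw4⟩ := hw3
        have hxm : m = x := by rw [← hta, hta']
        subst hxm
        have hlen' : (a :: l3).length ≤ n := by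
          simp only [List.length_cons, List.length_append] at hlen ⊢
          omega
        obtain ⟨P, hPsub, hPsum⟩ := ih (a :: l3) m hlen' ⟨haD, hta', hw4⟩
        refine ⟨P, ?_, hPsum⟩
        intro b hb
        rcases List.mem_cons.1 (hPsub b hb) with rfl | hb'
        · exact List.mem_cons_self
        · exact List.mem_cons_of_mem _ (List.mem_append_right _ (List.mem_cons_of_mem _ hb'))
      · have hlen' : l'.length ≤ n := by
          simp only [List.length_cons] at hlen; omega
        obtain ⟨P, hPsub, hPsum⟩ := ih l' (dh a) hlen' hw'
        have haP : a ∉ P := fun h => hal (hPsub a h)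
        refine ⟨insert a P, ?_, ?_⟩
        · intro b hb
          rcases Finset.mem_insert.1 hb with rfl | hb'
          · exact List.mem_cons_self
          · exact List.mem_cons_of_mem _ (hPsub b hb')
        · intro v
          rw [Finset.sum_insert haP, hPsum v, hwf a, hta]
          ring

end AuxWalk

section AuxSwap
variable [Fintype V] [Fintype E] [DecidableEq V] [DecidableEq E]
variable (src tgt : E → V) (σ : E → Bool)

lemma swap_lemma (F1 F2 : Finset E) (x y : V) (hxy : x ≠ y) (k : ℤ) (hk : 1 ≤ k)
    (hs : ∀ v, scoreSub src tgt σ F2 v = scoreSub src tgt σ F1 v + k * chi x y v) :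
    ∃ F, F ⊆ F1 ∪ F2 ∧
      ∀ v, scoreSub src tgt σ F v = scoreSub src tgt σ F1 v + chi x y v := by
  classical
  set D := (F2 \ F1) ∪ (F1 \ F2) with hD
  set dt := dtail src tgt σ F1 with hdt
  set dh := dhead src tgt σ F1 with hdh
  have hdiv : ∀ v, ∑ a ∈ D, wv src tgt σ F1 a v = k * chi x y v := by
    intro v
    rw [hD, sum_wv, hs v]; ring
  have hreach : Relation.ReflTransGen (fun p q => ∃ a ∈ D, dt a = p ∧ dh a = q) x y := by
    by_contra hnr
    set R : Finset V := univ.filter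
      (fun v => Relation.ReflTransGen (fun p q => ∃ a ∈ D, dt a = p ∧ dh a = q) x v) with hR
    have hx : x ∈ R := mem_filter.2 ⟨mem_univ _, Relation.ReflTransGen.refl⟩
    have hy : y ∉ R := fun h => hnr ((mem_filter.1 h).2)
    have hclosed : ∀ a ∈ D, dt a ∈ R → dh a ∈ R := by
      intro a ha hta
      exact mem_filter.2 ⟨mem_univ _, ((mem_filter.1 hta).2).tail ⟨a, ha, rfl, rfl⟩⟩
    have h1 : ∑ v ∈ R, ∑ a ∈ D, wv src tgt σ F1 a v ≤ 0 := by
      rw [Finset.sum_comm]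
      apply Finset.sum_nonpos
      intro a ha
      have : ∑ v ∈ R, wv src tgt σ F1 a v
          = (if dtail src tgt σ F1 a ∈ R then (1:ℤ) else 0)
            - (if dhead src tgt σ F1 a ∈ R then 1 else 0) := by
        rw [show (fun v => wv src tgt σ F1 a v) = wv src tgt σ F1 a from rfl]
        simp only [wv.eq_1, Finset.sum_sub_distrib, Finset.sum_ite_eq]
      rw [this]
      by_cases h : dtail src tgt σ F1 a ∈ R
      · rw [if_pos h, if_pos (hclosed a ha h)]; norm_num
      · rw [if_neg h]
        by_cases h2 : dhead src tgt σ F1 a ∈ R <;> simp [h2]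
    have h2 : ∑ v ∈ R, (k * chi x y v) = k := by
      rw [← Finset.mul_sum]
      have : ∑ v ∈ R, chi x y v = 1 := by
        simp only [chi, Finset.sum_sub_distrib, Finset.sum_ite_eq]
        rw [if_pos hx, if_neg hy]
        norm_num
      rw [this, mul_one]
    have := Finset.sum_congr rfl (fun v (_ : v ∈ R) => hdiv v)
    omega
  obtain ⟨l, hl⟩ := walk_of_rtg dt dh D hreach
  obtain ⟨P, hPl, hPsum⟩ := walk_extract dt dh D (wv src tgt σ F1)
    (fun a => rfl) l.length l x le_rfl hl
  have hPD : P ⊆ D := fun a ha => isWalk_mem_D dt dh D hl a (hPl a ha)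
  refine ⟨(F1 \ P) ∪ (P \ F1), ?_, ?_⟩
  · intro a ha
    rcases Finset.mem_union.1 ha with h | h
    · exact Finset.mem_union.2 (Or.inl (Finset.mem_sdiff.1 h).1)
    · have haD := hPD (Finset.mem_sdiff.1 h).1
      have hnF1 := (Finset.mem_sdiff.1 h).2
      rcases Finset.mem_union.1 haD with h2 | h2
      · exact Finset.mem_union.2 (Or.inr (Finset.mem_sdiff.1 h2).1)
      · exact absurd (Finset.mem_sdiff.1 h2).1 hnF1
  · intro v
    have hsplit : ∑ a ∈ P, wv src tgt σ F1 a v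
        = ∑ a ∈ P ∩ F1, wv src tgt σ F1 a v + ∑ a ∈ P \ F1, wv src tgt σ F1 a v :=
      (Finset.sum_inter_add_sum_sdiff _ _ _).symm
    have hm : ∑ a ∈ P ∩ F1, wv src tgt σ F1 a v = - ∑ a ∈ P ∩ F1, uvec src tgt σ a v := by
      rw [← Finset.sum_neg_distrib]
      exact Finset.sum_congr rfl (fun a ha => wv_of_mem _ _ _ (Finset.mem_inter.1 ha).2 v)
    have hnm : ∑ a ∈ P \ F1, wv src tgt σ F1 a v = ∑ a ∈ P \ F1, uvec src tgt σ a v :=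
      Finset.sum_congr rfl (fun a ha => wv_of_not_mem _ _ _ (Finset.mem_sdiff.1 ha).2 v)
    have hF1split : ∑ a ∈ F1, uvec src tgt σ a v
        = ∑ a ∈ F1 ∩ P, uvec src tgt σ a v + ∑ a ∈ F1 \ P, uvec src tgt σ a v :=
      (Finset.sum_inter_add_sum_sdiff _ _ _).symm
    have hFsum : scoreSub src tgt σ ((F1 \ P) ∪ (P \ F1)) v
        = ∑ a ∈ F1 \ P, uvec src tgt σ a v + ∑ a ∈ P \ F1, uvec src tgt σ a v := by
      rw [scoreSub_sum, Finset.sum_union disjoint_sdiff_sdiff]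
    have hP := hPsum v
    rw [hsplit, hm, hnm] at hP
    rw [hFsum, scoreSub_sum src tgt σ F1 v, hF1split, Finset.inter_comm F1 P, chi_apply]
    omega

noncomputable def TT (S : Finset E) : Finset (V → ℤ) :=
  S.powerset.image (scoreSub src tgt σ)

lemma mem_TT {S : Finset E} {g : V → ℤ} :
    g ∈ TT src tgt σ S ↔ ∃ F, F ⊆ S ∧ scoreSub src tgt σ F = g := by
  constructor
  · intro h
    obtain ⟨F, hF, hFe⟩ := Finset.mem_image.1 h
    exact ⟨F, Finset.mem_powerset.1 hF, hFe⟩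
  · rintro ⟨F, hF, hFe⟩
    exact Finset.mem_image.2 ⟨F, Finset.mem_powerset.2 hF, hFe⟩

lemma contig (S : Finset E) (x y : V) (hxy : x ≠ y) :
    ∀ (n : ℕ) (g : V → ℤ), g ∈ TT src tgt σ S →
      g + ((n : ℤ) + 1) • chi x y ∈ TT src tgt σ S →
      g + (n : ℤ) • chi x y ∈ TT src tgt σ S ∧ g + chi x y ∈ TT src tgt σ S := by
  intro n
  induction n with
  | zero =>
    intro g hg htop
    rw [show ((0:ℕ):ℤ) + 1 = 1 by norm_num, one_smul] at htop
    exact ⟨by simpa using hg, htop⟩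
  | succ n ih =>
    intro g hg htop
    obtain ⟨F1, hF1S, hF1⟩ := (mem_TT _ _ _).1 hg
    obtain ⟨F2, hF2S, hF2⟩ := (mem_TT _ _ _).1 htop
    have hstep : g + chi x y ∈ TT src tgt σ S := by
      obtain ⟨F, hFsub, hF⟩ := swap_lemma src tgt σ F1 F2 x y hxy ((n:ℤ)+1+1)
        (by omega) (fun v => by
          have h2 := congrFun hF2 v
          have h1 := congrFun hF1 v
          simp only [Pi.add_apply, Pi.smul_apply, smul_eq_mul] at h2
          push_cast at h2
          rw [← h1] at h2
          linarith [h2])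
      refine (mem_TT _ _ _).2 ⟨F, fun a ha => ?_, funext (fun v => by
        rw [hF v, congrFun hF1 v]; rfl)⟩
      rcases Finset.mem_union.1 (hFsub ha) with h | h
      · exact hF1S h
      · exact hF2S h
    have hkey : (g + chi x y) + ((n:ℤ) + 1) • chi x y ∈ TT src tgt σ S := by
      have : (g + chi x y) + ((n:ℤ) + 1) • chi x y = g + ((n:ℤ) + 1 + 1) • chi x y := by
        funext v; simp only [Pi.add_apply, Pi.smul_apply, smul_eq_mul]; ring
      rw [this]
      exact_mod_cast htop
    obtain ⟨hmid, -⟩ := ih (g + chi x y) hstep hkey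
    have : (g + chi x y) + (n:ℤ) • chi x y = g + ((n:ℤ)+1) • chi x y := by
      funext v; simp only [Pi.add_apply, Pi.smul_apply, smul_eq_mul]; ring
    rw [this] at hmid
    exact ⟨by exact_mod_cast hmid, hstep⟩

lemma hcont_of_contig (S : Finset E) (x y : V) (hxy : x ≠ y) :
    ∀ g ∈ TT src tgt σ S, ∀ k : ℤ, 1 ≤ k → g + k • chi x y ∈ TT src tgt σ S →
      g + (k - 1) • chi x y ∈ TT src tgt σ S := by
  intro g hg k hk htop
  obtain ⟨n, hn⟩ : ∃ n : ℕ, (n : ℤ) = k - 1 := ⟨(k-1).toNat, Int.toNat_of_nonneg (by omega)⟩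
  have := (contig src tgt σ S x y hxy n g hg (by rw [hn]; simpa using htop)).1
  rwa [hn] at this

end AuxSwap

section AuxMain
variable [Fintype V] [Fintype E] [DecidableEq V] [DecidableEq E]
variable (src tgt : E → V) (σ : E → Bool)

lemma uvec_loop {e : E} (h : src e = tgt e) : uvec src tgt σ e = 0 := by
  funext v
  have : otail src tgt σ e = ohead src tgt σ e := by
    unfold otail ohead; by_cases hσ : σ e <;> simp [hσ, h]
  simp [uvec, this]

lemma uvec_eq_chi (e : E) :
    uvec src tgt σ e = chi (otail src tgt σ e) (ohead src tgt σ e) := rfl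

lemma otail_ne_ohead {e : E} (h : src e ≠ tgt e) :
    otail src tgt σ e ≠ ohead src tgt σ e := by
  unfold otail ohead; by_cases hσ : σ e <;> simp [hσ, h, Ne.symm h]

lemma ends_eq_pair (e : E) :
    s(src e, tgt e) = s(otail src tgt σ e, ohead src tgt σ e) := by
  unfold otail ohead; by_cases hσ : σ e <;> simp [hσ, Sym2.eq_swap]

lemma scoreSub_contract (x y : V) (hxy : x ≠ y) (F : Finset E) :
    scoreSub (fun a => if src a = y then x else src a) (fun a => if tgt a = y then x else tgt a)
      σ F = piC x y (scoreSub src tgt σ F) := by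
  set r : V → V := fun v => if v = y then x else v with hrdef
  set src' : E → V := fun a => if src a = y then x else src a with hsrc'
  set tgt' : E → V := fun a => if tgt a = y then x else tgt a with htgt'
  have ht' : ∀ a, otail src' tgt' σ a = r (otail src tgt σ a) := by
    intro a; unfold otail; by_cases hσ : σ a <;> simp [hσ, hsrc', htgt', hrdef]
  have hh' : ∀ a, ohead src' tgt' σ a = r (ohead src tgt σ a) := by
    intro a; unfold ohead; by_cases hσ : σ a <;> simp [hσ, hsrc', htgt', hrdef]
  have hrny : ∀ u, r u ≠ y := by
    intro u; by_cases hu : u = y <;> simp [hrdef, hu, hxy]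
  have hrx : ∀ u, r u = x ↔ (u = x ∨ u = y) := by
    intro u
    by_cases hu : u = y
    · subst hu
      simp only [hrdef, if_pos rfl]
      simp
    · simp only [hrdef, if_neg hu]
      exact ⟨fun h => Or.inl h, fun h => h.resolve_right hu⟩
  have hrv : ∀ u v, v ≠ x → v ≠ y → (r u = v ↔ u = v) := by
    intro u v hvx hvy
    by_cases hu : u = y
    · subst hu
      simp only [hrdef, if_pos rfl]
      exact iff_of_false (fun h => hvx h.symm) (fun h => hvy h.symm)
    · simp only [hrdef, if_neg hu]
  funext v
  by_cases hvy : v = y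
  · subst hvy
    have h1 : F.filter (fun a => otail src' tgt' σ a = v) = ∅ := by
      rw [Finset.filter_eq_empty_iff]
      intro a _; rw [ht']; exact hrny _
    have h2 : F.filter (fun a => ohead src' tgt' σ a = v) = ∅ := by
      rw [Finset.filter_eq_empty_iff]
      intro a _; rw [hh']; exact hrny _
    rw [scoreSub, h1, h2, piC]
    simp
  · by_cases hvx : v = x
    · subst hvx
      have h1 : F.filter (fun a => otail src' tgt' σ a = v)
          = F.filter (fun a => otail src tgt σ a = v) ∪ F.filter (fun a => otail src tgt σ a = y) := by
        rw [← Finset.filter_or]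
        apply Finset.filter_congr
        intro a _; rw [ht']; exact (hrx _)
      have h2 : F.filter (fun a => ohead src' tgt' σ a = v)
          = F.filter (fun a => ohead src tgt σ a = v) ∪ F.filter (fun a => ohead src tgt σ a = y) := by
        rw [← Finset.filter_or]
        apply Finset.filter_congr
        intro a _; rw [hh']; exact (hrx _)
      have hd1 : Disjoint (F.filter (fun a => otail src tgt σ a = v))
          (F.filter (fun a => otail src tgt σ a = y)) := by
        rw [Finset.disjoint_left]
        intro a h1 h2
        rw [Finset.mem_filter] at h1 h2
        exact hvy (h1.2.symm.trans h2.2)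
      have hd2 : Disjoint (F.filter (fun a => ohead src tgt σ a = v))
          (F.filter (fun a => ohead src tgt σ a = y)) := by
        rw [Finset.disjoint_left]
        intro a h1 h2
        rw [Finset.mem_filter] at h1 h2
        exact hvy (h1.2.symm.trans h2.2)
      rw [scoreSub, h1, h2, Finset.card_union_of_disjoint hd1, Finset.card_union_of_disjoint hd2,
        piC]
      simp only [if_neg hvy, eq_self_iff_true, if_true]
      rw [scoreSub, scoreSub]
      push_cast
      ring
    · have h1 : F.filter (fun a => otail src' tgt' σ a = v)
          = F.filter (fun a => otail src tgt σ a = v) := by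
        apply Finset.filter_congr
        intro a _; rw [ht']; exact hrv _ _ hvx hvy
      have h2 : F.filter (fun a => ohead src' tgt' σ a = v)
          = F.filter (fun a => ohead src tgt σ a = v) := by
        apply Finset.filter_congr
        intro a _; rw [hh']; exact hrv _ _ hvx hvy
      rw [scoreSub, h1, h2, piC]
      simp only [if_neg hvy, if_neg hvx]
      rw [scoreSub]

lemma main_count :
    ∀ (n : ℕ) (src tgt : E → V) (σ : E → Bool) (S : Finset E), S.card = n →
    (TT src tgt σ S).card = (S.powerset.filter
      (fun A => numComponents (fun e => s(src e, tgt e)) A + A.card = Fintype.card V)).card := by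
  intro n
  induction n with
  | zero =>
    intro src tgt σ S hS
    rw [Finset.card_eq_zero] at hS
    subst hS
    rw [TT, Finset.powerset_empty, Finset.image_singleton, Finset.card_singleton]
    rw [Finset.filter_singleton]
    rw [if_pos (by rw [numComponents_empty]; simp)]
    rfl
  | succ n ih =>
    intro src tgt σ S hS
    have hSne : S.Nonempty := Finset.card_pos.1 (by omega)
    obtain ⟨e, heS⟩ := hSne
    set S' := S.erase e with hS'def
    have heS' : e ∉ S' := Finset.notMem_erase e S
    have hins : insert e S' = S := Finset.insert_erase heS
    have hS'card : S'.card = n := by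
      rw [hS'def, Finset.card_erase_of_mem heS, hS]
      omega
    by_cases hloop : src e = tgt e
    · have hTT : TT src tgt σ S = TT src tgt σ S' := by
        apply Finset.Subset.antisymm
        · intro g hg
          obtain ⟨F, hFS, rfl⟩ := (mem_TT src tgt σ).1 hg
          refine (mem_TT src tgt σ).2 ⟨F.erase e, fun a ha => ?_, funext fun v => ?_⟩
          · exact Finset.mem_erase.2 ⟨(Finset.mem_erase.1 ha).1, hFS (Finset.mem_erase.1 ha).2⟩
          · by_cases heF : e ∈ F
            · conv_rhs => rw [← Finset.insert_erase heF]
              rw [scoreSub_insert src tgt σ (Finset.notMem_erase e F) v,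
                uvec_loop src tgt σ hloop]
              simp
            · rw [Finset.erase_eq_of_notMem heF]
        · intro g hg
          obtain ⟨F, hFS, rfl⟩ := (mem_TT src tgt σ).1 hg
          exact (mem_TT src tgt σ).2 ⟨F, fun a ha => Finset.mem_of_mem_erase (hFS ha), rfl⟩
      have hforest : S.powerset.filter
            (fun A => numComponents (fun a => s(src a, tgt a)) A + A.card = Fintype.card V)
          = S'.powerset.filter
            (fun A => numComponents (fun a => s(src a, tgt a)) A + A.card = Fintype.card V) := by
        ext A
        simp only [Finset.mem_filter, Finset.mem_powerset]
        constructor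
        · rintro ⟨hA, hΦ⟩
          refine ⟨Finset.subset_erase.2 ⟨hA, fun heA => ?_⟩, hΦ⟩
          have hc : numComponents (fun a => s(src a, tgt a)) A
              = numComponents (fun a => s(src a, tgt a)) (A.erase e) := by
            conv_lhs => rw [← Finset.insert_erase heA]
            exact numComponents_insert_eq (Or.inl (by
              rw [Sym2.isDiag_iff_proj_eq]; exact hloop))
          have := card_le_comp_add (fun a => s(src a, tgt a)) (A.erase e)
          rw [Finset.card_erase_of_mem heA] at this
          have hAcard : 1 ≤ A.card := Finset.card_pos.2 ⟨e, heA⟩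
          omega
        · rintro ⟨hA, hΦ⟩
          exact ⟨hA.trans (Finset.erase_subset e S), hΦ⟩
      rw [hTT, hforest]
      exact ih src tgt σ S' hS'card
    · set x := otail src tgt σ e with hxdef
      set y := ohead src tgt σ e with hydef
      have hxy : x ≠ y := otail_ne_ohead src tgt σ hloop
      have hends : s(src e, tgt e) = s(x, y) := ends_eq_pair src tgt σ e
      set src' : E → V := fun a => if src a = y then x else src a with hsrc'
      set tgt' : E → V := fun a => if tgt a = y then x else tgt a with htgt'
      have hstep1 : TT src tgt σ S
          = TT src tgt σ S' ∪ (TT src tgt σ S').image (· + chi x y) := by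
        rw [TT, ← hins, Finset.powerset_insert, Finset.image_union]
        congr 1
        rw [Finset.image_image]
        have hcong : ∀ F ∈ S'.powerset,
            (scoreSub src tgt σ ∘ insert e) F = ((· + chi x y) ∘ scoreSub src tgt σ) F := by
          intro F hF
          have heF : e ∉ F := fun h => heS' (Finset.mem_powerset.1 hF h)
          funext v
          simp only [Function.comp_apply, Pi.add_apply]
          rw [scoreSub_insert src tgt σ heF v, uvec_eq_chi]
        rw [Finset.image_congr hcong, ← Finset.image_image]
        rfl
      have hstep2 : (TT src tgt σ S).card
            + (TT src tgt σ S' ∩ (TT src tgt σ S').image (· + chi x y)).card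
          = 2 * (TT src tgt σ S').card := by
        rw [hstep1, Finset.card_union_add_card_inter]
        rw [Finset.card_image_of_injective _ (fun g g' h => by
          have := congrArg (· - chi x y) h
          simpa using this)]
        ring
      have hstep3 := pi_count (TT src tgt σ S') x y hxy (hcont_of_contig src tgt σ S' x y hxy)
      have hstep4 : TT src' tgt' σ S' = (TT src tgt σ S').image (piC x y) := by
        rw [TT, TT, Finset.image_image]
        apply Finset.image_congr
        intro F _
        exact scoreSub_contract src tgt σ x y hxy F
      have hstep5 : (S.powerset.filter
            (fun A => numComponents (fun a => s(src a, tgt a)) A + A.card = Fintype.card V)).card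
          = (S'.powerset.filter
              (fun A => numComponents (fun a => s(src a, tgt a)) A + A.card = Fintype.card V)).card
            + (S'.powerset.filter
              (fun A => numComponents (fun a => s(src' a, tgt' a)) A + A.card
                = Fintype.card V)).card := by
        rw [← hins, Finset.powerset_insert, Finset.filter_union]
        rw [Finset.card_union_of_disjoint (by
          rw [Finset.disjoint_left]
          intro A hA hA2
          have h1 := Finset.mem_powerset.1 (Finset.mem_of_mem_filter A hA)
          have h2 := Finset.mem_of_mem_filter A hA2
          obtain ⟨B, hB, rfl⟩ := Finset.mem_image.1 h2
          exact heS' (h1 (Finset.mem_insert_self e B)))]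
        congr 1
        rw [Finset.filter_image]
        rw [Finset.card_image_of_injOn (fun A hA B hB hAB => by
          simp only [Finset.coe_filter, Set.mem_setOf_eq] at hA hB
          have heA : e ∉ A := fun h => heS' (Finset.mem_powerset.1 hA.1 h)
          have heB : e ∉ B := fun h => heS' (Finset.mem_powerset.1 hB.1 h)
          rw [← Finset.erase_insert heA, ← Finset.erase_insert heB, hAB])]
        have hmap : (fun a => s(src' a, tgt' a))
            = (fun a => (s(src a, tgt a)).map (fun v => if v = y then x else v)) := by
          funext a
          rw [Sym2.map_pair_eq]
        have hfc : S'.powerset.filter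
              (fun A => numComponents (fun a => s(src a, tgt a)) (insert e A)
                + (insert e A).card = Fintype.card V)
            = S'.powerset.filter
              (fun A => numComponents (fun a => s(src' a, tgt' a)) A + A.card
                = Fintype.card V) := by
          apply Finset.filter_congr
          intro A hA
          have heA : e ∉ A := fun h => heS' (Finset.mem_powerset.1 hA h)
          have hc := card_comp_contract' (ends := fun a => s(src a, tgt a)) hxy hends heA
          rw [hmap, hc, Finset.card_insert_of_notMem heA]
          constructor <;> (intro h; omega)
        rw [hfc]
      have h4card : (TT src' tgt' σ S').card = ((TT src tgt σ S').image (piC x y)).card := by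
        rw [hstep4]
      have ih1 := ih src tgt σ S' hS'card
      have ih2 := ih src' tgt' σ S' hS'card
      omega

theorem stmt_12' (src tgt : E → V) (σ0 : E → Bool) :
    (Nat.card (Set.range fun F : Finset E => scoreSub src tgt σ0 F) : ℤ) =
        tutteEval (fun e => s(src e, tgt e)) 2 1 ∧
      Nat.card (Set.range fun F : Finset E => scoreSub src tgt σ0 F) =
        Nat.card {A : Finset E // IsForestEdges (fun e => s(src e, tgt e)) A} := by
  classical
  set ends : E → Sym2 V := fun e => s(src e, tgt e) with hends
  set Φ : Finset E → Prop := fun A => numComponents ends A + A.card = Fintype.card V with hΦ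
  have hkey := main_count (univ : Finset E).card src tgt σ0 univ rfl
  have hscore : Nat.card (Set.range fun F : Finset E => scoreSub src tgt σ0 F)
      = (TT src tgt σ0 (univ : Finset E)).card := by
    have h1 : (Set.range fun F : Finset E => scoreSub src tgt σ0 F)
        = ↑((univ : Finset (Finset E)).image (fun F => scoreSub src tgt σ0 F)) := by
      rw [Finset.coe_image, Finset.coe_univ, Set.image_univ]
    rw [h1, TT, Finset.powerset_univ]
    exact Nat.card_eq_finsetCard _
  have hforest : Nat.card {A : Finset E // IsForestEdges ends A}
      = ((univ : Finset E).powerset.filter Φ).card := by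
    rw [Nat.card_eq_fintype_card, Fintype.card_subtype, Finset.powerset_univ]
    congr 1
    apply Finset.filter_congr
    intro A _
    exact ⟨fun h => comp_add_card_of_forest h, fun h => forest_of_comp_add_card h⟩
  have htutte : tutteEval ends 2 1 = (((univ : Finset E).powerset.filter Φ).card : ℤ) := by
    rw [tutteEval, Finset.powerset_univ]
    have hterm : ∀ A : Finset E,
        ((2:ℤ) - 1) ^ (numComponents ends A - numComponents ends Finset.univ) *
          ((1:ℤ) - 1) ^ (numComponents ends A + A.card - Fintype.card V)
        = if Φ A then 1 else 0 := by
      intro A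
      have h21 : ((2:ℤ) - 1) = 1 := by norm_num
      have h11 : ((1:ℤ) - 1) = 0 := by norm_num
      rw [h21, h11, one_pow, one_mul, zero_pow_eq]
      have hle := card_le_comp_add ends A
      by_cases hφ : Φ A
      · rw [if_pos hφ, if_pos]
        have hφ' : numComponents ends A + A.card = Fintype.card V := hφ
        omega
      · rw [if_neg hφ, if_neg]
        have hφ' : ¬ (numComponents ends A + A.card = Fintype.card V) := hφ
        omega
    rw [Finset.sum_congr rfl (fun A _ => hterm A), Finset.sum_boole]
  refine ⟨?_, ?_⟩
  · rw [hscore, htutte, hkey]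
  · rw [hscore, hforest, hkey]

end AuxMain

/-- For any fixed orientation `σ0` of `G`, the number of distinct score vectors
of spanning subdigraphs of `G_{σ0}` equals `T_G(2,1)`, i.e. the number of
spanning forests of `G` (in particular it does not depend on `σ0`). -/
theorem stmt_12 [Fintype V] [Fintype E] [DecidableEq V] [DecidableEq E]
    (src tgt : E → V) (σ0 : E → Bool) :
    (Nat.card (Set.range fun F : Finset E => scoreSub src tgt σ0 F) : ℤ) =
        tutteEval (fun e => s(src e, tgt e)) 2 1 ∧
      Nat.card (Set.range fun F : Finset E => scoreSub src tgt σ0 F) =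
        Nat.card {A : Finset E // IsForestEdges (fun e => s(src e, tgt e)) A} := by
  exact stmt_12' src tgt σ0
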